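/- In the reduction program P(A), after executing k loop iterations choosing letters a_1,...,a_k (starting from a store where all variables are positive except X_{q_0} = 0), the variable X_q holds 0 if and only if state q is reachable in A from q_0 on the word a_1...a_k; consequently after Fin, Z = 0 if and only if A accepts a_1...a_k. -/

import Mathlib

open Finset

variable {n : ℕ}

/-- One subset-construction step of the NFA with transition relation `δ`. -/
def setStep (δ : Fin n → Fin 2 → Fin n → Bool) (S : Finset (Fin n))
    (a : Fin 2) : Finset (Fin n) :=
  Finset.univ.filter fun q => ∃ i ∈ S, δ i a q

/-- The set of states of the NFA reachable from `q₀` on the word `w`. -/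
def reachSet (δ : Fin n → Fin 2 → Fin n → Bool) (q₀ : Fin n)
    (w : List (Fin 2)) : Finset (Fin n) :=
  w.foldl (setStep δ) {q₀}

/-- The NFA `(Fin n, {0,1}, δ, q₀, F)` accepts the word `w`. -/
def Accepts (δ : Fin n → Fin 2 → Fin n → Bool) (q₀ : Fin n)
    (F : Finset (Fin n)) (w : List (Fin 2)) : Prop :=
  ∃ f ∈ F, f ∈ reachSet δ q₀ w

/-- One iteration of the loop of the reduction program, choosing letter `a`:
for each state `q`, `X'_q := Z · ∏ (X_i over a-predecessors i of q)`, then the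
`X'_q` are copied into the `X_q`; `Z` is unchanged.  The store is the pair of
the state variables `X` and the variable `Z`. -/
def progStep (δ : Fin n → Fin 2 → Fin n → Bool) (a : Fin 2)
    (s : (Fin n → ℕ) × ℕ) : (Fin n → ℕ) × ℕ :=
  (fun q => s.2 * ∏ i ∈ Finset.univ.filter (fun i => δ i a q), s.1 i, s.2)

/-- Executing the loop body once per letter of `w`, starting from the store
obtained from the input `x` by the initial reset `X_{q₀} := 0` (and `Z = z`). -/
def runLoop (δ : Fin n → Fin 2 → Fin n → Bool) (q₀ : Fin n)
    (x : Fin n → ℕ) (z : ℕ) (w : List (Fin 2)) : (Fin n → ℕ) × ℕ :=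
  w.foldl (fun s a => progStep δ a s) (Function.update x q₀ 0, z)

/-- The final value of `Z` after the command `Fin`, which sets
`Z := Z · ∏_{f ∈ F} X_f`. -/
def finOut (δ : Fin n → Fin 2 → Fin n → Bool) (q₀ : Fin n)
    (F : Finset (Fin n)) (x : Fin n → ℕ) (z : ℕ) (w : List (Fin 2)) : ℕ :=
  (runLoop δ q₀ x z w).2 * ∏ f ∈ F, (runLoop δ q₀ x z w).1 f

/-- starting from a store positive everywhere except
`X_{q₀} = 0`, after the loop iterations for the letters of `w` the variable
`X_q` is zero iff `q` is reachable on `w`; consequently after `Fin`,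
`Z = 0` iff the NFA accepts `w`. -/

lemma loop_invariant (δ : Fin n → Fin 2 → Fin n → Bool) (w : List (Fin 2)) :
    ∀ (s : (Fin n → ℕ) × ℕ) (S : Finset (Fin n)), 0 < s.2 →
    (∀ q, s.1 q = 0 ↔ q ∈ S) →
    0 < (w.foldl (fun s a => progStep δ a s) s).2 ∧
    ∀ q, (w.foldl (fun s a => progStep δ a s) s).1 q = 0 ↔ q ∈ w.foldl (setStep δ) S := by
  induction w with
  | nil => exact fun s S hz h => ⟨hz, h⟩
  | cons a w ih =>
    intro s S hz h
    simp only [List.foldl_cons]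
    apply ih
    · exact hz
    · intro q
      simp only [progStep, setStep, Finset.mem_filter, Finset.mem_univ, true_and,
        Nat.mul_eq_zero, Finset.prod_eq_zero_iff]
      constructor
      · rintro (h0 | ⟨i, hi, hi0⟩)
        · omega
        · exact ⟨i, (h i).mp hi0, by simpa using hi⟩
      · rintro ⟨i, hiS, hd⟩
        exact Or.inr ⟨i, by simpa using hd, (h i).mpr hiS⟩

theorem zero_iff_reachable
    (δ : Fin n → Fin 2 → Fin n → Bool) (q₀ : Fin n) (F : Finset (Fin n))
    (x : Fin n → ℕ) (z : ℕ) (w : List (Fin 2))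
    (hx : ∀ q : Fin n, q ≠ q₀ → 0 < x q) (hz : 0 < z) :
    (∀ q : Fin n, (runLoop δ q₀ x z w).1 q = 0 ↔ q ∈ reachSet δ q₀ w) ∧
    (finOut δ q₀ F x z w = 0 ↔ Accepts δ q₀ F w) := by
  have key := loop_invariant δ w (Function.update x q₀ 0, z) {q₀} hz ?_
  · refine ⟨key.2, ?_⟩
    unfold finOut Accepts
    rw [Nat.mul_eq_zero, Finset.prod_eq_zero_iff]
    constructor
    · rintro (h0 | ⟨f, hf, hf0⟩)
      · exact absurd h0 key.1.ne'
      · exact ⟨f, hf, (key.2 f).mp hf0⟩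
    · rintro ⟨f, hf, hfr⟩
      exact Or.inr ⟨f, hf, (key.2 f).mpr hfr⟩
  · intro q
    rcases eq_or_ne q q₀ with rfl | hq
    · simp [Function.update_self]
    · simp [Function.update_of_ne hq, hq,
        (hx q hq).ne']
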